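/- arXiv:2102.04182 — 2 statements merged into one kernel-verified Lean document; each statement's English description precedes it below -/
import Mathlib

section
/- For every error support E ⊆ {1,…,L}, every matrix Y ∈ F_q^{n×L} with error support contained in E, all integers ν,θ ≥ 1, and every integer i with 0 ≤ i < δ_{ν,θ}, the pair (x^i·Λ·v, x^i·Λ·d) belongs to S_{Y,ν,θ}; consequently ⟨x^iΛv, x^iΛd⟩_{0≤i<δ_{ν,θ}} ⊆ S_{Y,ν,θ}. -/
open Polynomial

/-- The solution space `S_{Y,ν,θ}` of the key equations: pairs `(φ, ψ)` with
`deg φᵢ < ν`, `deg ψ < θ` and `φᵢ(α_j) = Y_{i,j} ψ(α_j)` for all `i, j`. -/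
def keySol {F : Type*} [Field F] {n L : ℕ}
    (α : Fin L → F) (Y : Fin n → Fin L → F) (ν θ : ℕ) :
    Set ((Fin n → F[X]) × F[X]) :=
  {p | (∀ i, (p.1 i).degree < (ν : WithBot ℕ)) ∧ p.2.degree < (θ : WithBot ℕ) ∧
    ∀ i j, (p.1 i).eval (α j) = Y i j * p.2.eval (α j)}

/-- The error locator polynomial `Λ = ∏_{j ∈ E} (x - α_j)`. -/
noncomputable def errLoc {F : Type*} [Field F] {L : ℕ}
    (α : Fin L → F) (E : Finset (Fin L)) : F[X] :=
  ∏ j ∈ E, (X - C (α j))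

/-- The `F`-linear span `⟨xⁱΛv, xⁱΛd⟩_{0 ≤ i < δ}`, equal to `{(0,0)}` when `δ ≤ 0`. -/
noncomputable def lamSpan {F : Type*} [Field F] {n L : ℕ}
    (α : Fin L → F) (E : Finset (Fin L)) (v : Fin n → F[X]) (d : F[X]) (δ : ℤ) :
    Submodule F ((Fin n → F[X]) × F[X]) :=
  Submodule.span F {p : (Fin n → F[X]) × F[X] | ∃ i : ℕ, (i : ℤ) < δ ∧
    p = (fun k => X ^ i * errLoc α E * v k, X ^ i * errLoc α E * d)}

/-- `deg(v) = max_i deg(vᵢ)` for a vector of polynomials. -/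
noncomputable def vecDeg {F : Type*} [Semiring F] {n : ℕ} (v : Fin n → F[X]) : ℕ :=
  Finset.univ.sup fun i => (v i).natDegree

/-- `deg(A) = max_{i,j} deg(A_{i,j})` for a matrix of polynomials. -/
noncomputable def matDeg {F : Type*} [Semiring F] {n : ℕ}
    (A : Matrix (Fin n) (Fin n) F[X]) : ℕ :=
  Finset.univ.sup fun p : Fin n × Fin n => (A p.1 p.2).natDegree

/-- `𝓛(ν,θ) = min{max{N−1+θ, D−1+ν}, max{deg(A)+ν, deg(b)+θ}}`. -/
def Lbound (N D degA degb ν θ : ℕ) : ℕ :=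
  min (max (N - 1 + θ) (D - 1 + ν)) (max (degA + ν) (degb + θ))

/-- for every error support `E`, every `Y` with error support contained in `E`,
all `ν,θ ≥ 1`, and every `0 ≤ i < δ_{ν,θ}`, the pair `(xⁱΛv, xⁱΛd)` belongs to `S_{Y,ν,θ}`;
consequently `⟨xⁱΛv, xⁱΛd⟩_{0≤i<δ_{ν,θ}} ⊆ S_{Y,ν,θ}`. -/
theorem stmt1 {F : Type*} [Field F] {n L : ℕ} (hn : 0 < n)
    (A : Matrix (Fin n) (Fin n) F[X]) (b v : Fin n → F[X]) (d : F[X])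
    (hdet : A.det ≠ 0) (hmonic : d.Monic)
    (hcop : ∀ g : F[X], (∀ i, g ∣ v i) → g ∣ d → IsUnit g)
    (hsol : A.mulVec v = d • b)
    (α : Fin L → F) (hα : Function.Injective α)
    (hAα : ∀ j, (A.map (fun p => p.eval (α j))).det ≠ 0)
    (hdα : ∀ j, d.eval (α j) ≠ 0)
    (E : Finset (Fin L)) (ν θ : ℕ) (hν : 1 ≤ ν) (hθ : 1 ≤ θ)
    (Y : Fin n → Fin L → F)
    (hY : ∀ j, j ∉ E → ∀ i, Y i j = (v i).eval (α j) / d.eval (α j)) :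
    (∀ i : ℕ, (i : ℤ) < min ((ν : ℤ) - ((vecDeg v + E.card : ℕ) : ℤ))
                           ((θ : ℤ) - ((d.natDegree + E.card : ℕ) : ℤ)) →
      ((fun k => X ^ i * errLoc α E * v k, X ^ i * errLoc α E * d) :
          (Fin n → F[X]) × F[X]) ∈ keySol α Y ν θ) ∧
    ↑(lamSpan α E v d
        (min ((ν : ℤ) - ((vecDeg v + E.card : ℕ) : ℤ))
             ((θ : ℤ) - ((d.natDegree + E.card : ℕ) : ℤ)))) ⊆ keySol α Y ν θ := by
  have hΛdeg : (errLoc α E).natDegree = E.card := by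
    rw [errLoc, Polynomial.natDegree_prod _ _ (fun j _ => Polynomial.X_sub_C_ne_zero (α j))]
    simp
  have key : ∀ i : ℕ, (i : ℤ) < min ((ν : ℤ) - ((vecDeg v + E.card : ℕ) : ℤ))
                           ((θ : ℤ) - ((d.natDegree + E.card : ℕ) : ℤ)) →
      ((fun k => X ^ i * errLoc α E * v k, X ^ i * errLoc α E * d) :
          (Fin n → F[X]) × F[X]) ∈ keySol α Y ν θ := by
    intro i hi
    rw [lt_min_iff] at hi
    obtain ⟨hi1, hi2⟩ := hi
    have hdegbound : ∀ (p : F[X]) (m : ℕ), p.natDegree + i + E.card < m →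
        (X ^ i * errLoc α E * p).degree < (m : WithBot ℕ) := by
      intro p m hm
      by_cases hp : p = 0
      · simp only [hp, mul_zero]
        rw [Polynomial.degree_zero]
        exact WithBot.bot_lt_coe m
      · have hnd : (X ^ i * errLoc α E * p).natDegree < m := by
          have h1 := Polynomial.natDegree_mul_le (p := X ^ i * errLoc α E) (q := p)
          have h2 := Polynomial.natDegree_mul_le (p := (X : F[X]) ^ i) (q := errLoc α E)
          have h3 : ((X : F[X]) ^ i).natDegree = i := Polynomial.natDegree_X_pow i
          omega
        calc (X ^ i * errLoc α E * p).degree ≤ ((X ^ i * errLoc α E * p).natDegree : WithBot ℕ) :=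
              Polynomial.degree_le_natDegree
          _ < (m : WithBot ℕ) := by exact_mod_cast hnd
    refine ⟨fun k => ?_, ?_, fun k j => ?_⟩
    · refine hdegbound (v k) ν ?_
      have hk : (v k).natDegree ≤ vecDeg v :=
        Finset.le_sup (f := fun i => (v i).natDegree) (Finset.mem_univ k)
      omega
    · refine hdegbound d θ ?_
      omega
    · by_cases hj : j ∈ E
      · have hΛ0 : (errLoc α E).eval (α j) = 0 := by
          rw [errLoc, Polynomial.eval_prod]
          exact Finset.prod_eq_zero hj (by simp)
        simp [hΛ0]
      · have hv : (v k).eval (α j) = Y k j * d.eval (α j) := by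
          rw [hY j hj k, div_mul_cancel₀ _ (hdα j)]
        simp only [Polynomial.eval_mul]
        rw [hv]; ring
  refine ⟨key, ?_⟩
  intro p hp
  refine Submodule.span_induction ?_ ?_ ?_ ?_ hp
  · rintro q ⟨i, hi, rfl⟩
    exact key i hi
  · refine ⟨fun i => ?_, ?_, fun i j => by simp⟩
    · simp only [Prod.fst_zero, Pi.zero_apply, Polynomial.degree_zero]
      exact WithBot.bot_lt_coe ν
    · simp only [Prod.snd_zero, Polynomial.degree_zero]
      exact WithBot.bot_lt_coe θ
  · rintro q r - - ⟨hq1, hq2, hq3⟩ ⟨hr1, hr2, hr3⟩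
    refine ⟨fun i => ?_, ?_, fun i j => ?_⟩
    · exact lt_of_le_of_lt (Polynomial.degree_add_le _ _) (max_lt (hq1 i) (hr1 i))
    · exact lt_of_le_of_lt (Polynomial.degree_add_le _ _) (max_lt hq2 hr2)
    · show ((q.1 + r.1) i).eval (α j) = Y i j * (q.2 + r.2).eval (α j)
      simp only [Pi.add_apply, Polynomial.eval_add]
      rw [hq3 i j, hr3 i j]; ring
  · rintro c q - ⟨hq1, hq2, hq3⟩
    refine ⟨fun i => ?_, ?_, fun i j => ?_⟩
    · exact lt_of_le_of_lt (Polynomial.degree_smul_le _ _) (hq1 i)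
    · exact lt_of_le_of_lt (Polynomial.degree_smul_le _ _) hq2
    · show ((c • q.1) i).eval (α j) = Y i j * (c • q.2).eval (α j)
      simp only [Pi.smul_apply, smul_eq_C_mul, Polynomial.eval_mul, Polynomial.eval_C]
      rw [hq3 i j]; ring
end

section
/- (Proposition 4.2, termination count of the early-termination strategy.) Let E ⊆ {1,…,L} be the error support. Then: (i) for all integers ν, θ ≥ 1 with δ_{ν,θ} > 0, one has 𝓛(ν,θ) ≥ 𝓛(deg(v),deg(d)) + |E| + 1; and (ii) for ν := deg(v)+|E|+1 and θ := deg(d)+|E|+1, one has 𝓛(ν,θ) = 𝓛(deg(v),deg(d)) + |E| + 1 and δ_{ν,θ} = 1 > 0. Consequently, the minimal value of 𝓛(ν,θ)+τ over pairs (ν,θ) with δ_{ν,θ} > 0 is L^s := 𝓛(deg(v),deg(d)) + |E| + 1 + τ. -/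
open Polynomial

lemma Lbound_key (N D a c ν θ k x y : ℕ) (h1 : x + k + 1 ≤ ν) (h2 : y + k + 1 ≤ θ) :
    Lbound N D a c x y + k + 1 ≤ Lbound N D a c ν θ := by
  unfold Lbound; omega

lemma Lbound_shift (N D a c x y k : ℕ) :
    Lbound N D a c (x + k) (y + k) = Lbound N D a c x y + k := by
  unfold Lbound; omega

/-- Proposition 4.2: (i) if `δ_{ν,θ} > 0` then
`𝓛(ν,θ) ≥ 𝓛(deg v, deg d) + |E| + 1`; (ii) for `ν = deg(v)+|E|+1`, `θ = deg(d)+|E|+1`,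
`𝓛(ν,θ) = 𝓛(deg v, deg d) + |E| + 1` and `δ_{ν,θ} = 1 > 0`; consequently the minimal value
of `𝓛(ν,θ)+τ` over pairs with `δ_{ν,θ} > 0` is `Lˢ = 𝓛(deg v, deg d) + |E| + 1 + τ`. -/
theorem stmt7 {F : Type*} [Field F] {n L : ℕ} (hn : 0 < n)
    (A : Matrix (Fin n) (Fin n) F[X]) (b v : Fin n → F[X]) (d : F[X])
    (hdet : A.det ≠ 0) (hmonic : d.Monic)
    (hcop : ∀ g : F[X], (∀ i, g ∣ v i) → g ∣ d → IsUnit g)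
    (hsol : A.mulVec v = d • b)
    (E : Finset (Fin L)) (N D τ : ℕ) (hN : vecDeg v < N) (hD : d.natDegree < D) :
    (∀ ν θ : ℕ, 1 ≤ ν → 1 ≤ θ →
      0 < min ((ν : ℤ) - ((vecDeg v + E.card : ℕ) : ℤ))
              ((θ : ℤ) - ((d.natDegree + E.card : ℕ) : ℤ)) →
      Lbound N D (matDeg A) (vecDeg b) (vecDeg v) d.natDegree + E.card + 1 ≤
        Lbound N D (matDeg A) (vecDeg b) ν θ) ∧
    (Lbound N D (matDeg A) (vecDeg b) (vecDeg v + E.card + 1) (d.natDegree + E.card + 1) =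
        Lbound N D (matDeg A) (vecDeg b) (vecDeg v) d.natDegree + E.card + 1 ∧
      min (((vecDeg v + E.card + 1 : ℕ) : ℤ) - ((vecDeg v + E.card : ℕ) : ℤ))
          (((d.natDegree + E.card + 1 : ℕ) : ℤ) - ((d.natDegree + E.card : ℕ) : ℤ)) = 1) ∧
    IsLeast {x : ℕ | ∃ ν θ : ℕ, 1 ≤ ν ∧ 1 ≤ θ ∧
        0 < min ((ν : ℤ) - ((vecDeg v + E.card : ℕ) : ℤ))
                ((θ : ℤ) - ((d.natDegree + E.card : ℕ) : ℤ)) ∧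
        x = Lbound N D (matDeg A) (vecDeg b) ν θ + τ}
      (Lbound N D (matDeg A) (vecDeg b) (vecDeg v) d.natDegree + E.card + 1 + τ) := by
  set dv := vecDeg v
  set dd := d.natDegree
  set k := E.card
  have part1 : ∀ ν θ : ℕ, 1 ≤ ν → 1 ≤ θ →
      0 < min ((ν : ℤ) - ((dv + k : ℕ) : ℤ)) ((θ : ℤ) - ((dd + k : ℕ) : ℤ)) →
      Lbound N D (matDeg A) (vecDeg b) dv dd + k + 1 ≤
        Lbound N D (matDeg A) (vecDeg b) ν θ := by
    intro ν θ hν hθ hδ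
    have h1 : dv + k + 1 ≤ ν := by
      have := lt_of_lt_of_le hδ (min_le_left _ _); push_cast at this; omega
    have h2 : dd + k + 1 ≤ θ := by
      have := lt_of_lt_of_le hδ (min_le_right _ _); push_cast at this; omega
    exact Lbound_key N D _ _ ν θ k dv dd h1 h2
  have heq : Lbound N D (matDeg A) (vecDeg b) (dv + k + 1) (dd + k + 1) =
      Lbound N D (matDeg A) (vecDeg b) dv dd + k + 1 := by
    rw [show dv + k + 1 = dv + (k + 1) from rfl, show dd + k + 1 = dd + (k + 1) from rfl]
    exact Lbound_shift N D (matDeg A) (vecDeg b) dv dd (k + 1)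
  refine ⟨part1, ⟨heq, by push_cast; omega⟩, ?_, ?_⟩
  · exact ⟨dv + k + 1, dd + k + 1, by omega, by omega, by push_cast; omega, by omega⟩
  · rintro x ⟨ν, θ, hν, hθ, hδ, rfl⟩
    have := part1 ν θ hν hθ hδ
    omega
end
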